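/- arXiv:1111.5159 — 2 statements merged into one kernel-verified Lean document; each statement's English description precedes it below -/
import Mathlib

section
/- For any finite sets A, B of real numbers, E_{1.5}(A)^2 · |B|^2 ≤ E_3(A)^{2/3} · E_3(B)^{1/3} · E(A, A+B), where E_3(X) = Σ_s δ_X(s)^3, E_{1.5}(A) = Σ_s δ_A(s)^{3/2}, and E(A,C) = Σ_s δ_A(s)δ_C(s) is the additive energy. -/
open Finset Pointwise

noncomputable def dlt (X Y : Finset ℝ) (s : ℝ) : ℕ :=
  ((X ×ˢ Y).filter (fun p => p.1 - p.2 = s)).card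

noncomputable def sg (X Y : Finset ℝ) (s : ℝ) : ℕ :=
  ((X ×ˢ Y).filter (fun p => p.1 + p.2 = s)).card

noncomputable def En (X Y : Finset ℝ) : ℝ :=
  ∑ s ∈ X - X, (dlt X X s : ℝ) * (dlt Y Y s : ℝ)

noncomputable def E3 (X : Finset ℝ) : ℝ :=
  ∑ s ∈ X - X, (dlt X X s : ℝ) ^ 3

noncomputable def E15 (X : Finset ℝ) : ℝ :=
  ∑ s ∈ X - X, (dlt X X s : ℝ) ^ ((3 : ℝ) / 2)

/-! ### Auxiliary definitions and lemmas -/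

/-- The number of `b ∈ B` such that `p.1 - b ∈ A` and `p.2 - b ∈ A`. -/
noncomputable def cC (A B : Finset ℝ) (p : ℝ × ℝ) : ℕ :=
  (B.filter (fun b => p.1 - b ∈ A ∧ p.2 - b ∈ A)).card

lemma dlt_eq_zero {X Y : Finset ℝ} {s : ℝ} (h : s ∉ X - Y) : dlt X Y s = 0 := by
  rw [dlt, Finset.card_eq_zero, Finset.filter_eq_empty_iff]
  rintro ⟨x, y⟩ hxy heq
  rw [Finset.mem_product] at hxy
  exact h (Finset.mem_sub.2 ⟨x, hxy.1, y, hxy.2, heq⟩)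

lemma sum_card_eq {α β : Type*} (Q : Finset α) (T : Finset β) (ψ : α → β → Prop)
    [∀ a b, Decidable (ψ a b)] :
    ∑ p ∈ Q, (T.filter (ψ p)).card = ((Q ×ˢ T).filter (fun x => ψ x.1 x.2)).card := by
  rw [Finset.card_filter, Finset.sum_product]
  refine Finset.sum_congr rfl fun p _ => ?_
  rw [Finset.card_filter]

lemma sum_card_comm {α β : Type*} (P : Finset α) (T : Finset β) (ψ : α → β → Prop)
    [∀ a b, Decidable (ψ a b)] :
    ∑ p ∈ P, (T.filter (fun q => ψ p q)).card
      = ∑ q ∈ T, (P.filter (fun p => ψ p q)).card := by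
  simp only [Finset.card_filter]
  exact Finset.sum_comm

/-- Key counting identity: `δ_A(s)·|B|` equals the number of pairs `(u,v) ∈ (A+B)²`
with `u - v = s`, counted with weight `cC A B (u,v)`. -/
lemma key_count (A B : Finset ℝ) (s : ℝ) :
    dlt A A s * B.card =
      ∑ p ∈ ((A + B) ×ˢ (A + B)).filter (fun p => p.1 - p.2 = s), cC A B p := by
  rw [show (∑ p ∈ ((A + B) ×ˢ (A + B)).filter (fun p => p.1 - p.2 = s), cC A B p)
      = ∑ p ∈ ((A + B) ×ˢ (A + B)).filter (fun p => p.1 - p.2 = s),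
          (B.filter (fun b => p.1 - b ∈ A ∧ p.2 - b ∈ A)).card from rfl,
    sum_card_eq, dlt, ← Finset.card_product]
  refine Finset.card_nbij' (fun x => ((x.1.1 + x.2, x.1.2 + x.2), x.2))
    (fun x => ((x.1.1 - x.2, x.1.2 - x.2), x.2)) ?_ ?_ ?_ ?_
  · rintro ⟨⟨a, a'⟩, b⟩ hx
    simp only [Finset.mem_coe, Finset.mem_product, Finset.mem_filter] at hx ⊢
    obtain ⟨⟨⟨ha, ha'⟩, hs⟩, hb⟩ := hx
    refine ⟨⟨⟨⟨?_, ?_⟩, ?_⟩, hb⟩, ?_, ?_⟩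
    · exact Finset.add_mem_add ha hb
    · exact Finset.add_mem_add ha' hb
    · simpa using hs
    · simpa using ha
    · simpa using ha'
  · rintro ⟨⟨u, v⟩, b⟩ hx
    simp only [Finset.mem_coe, Finset.mem_product, Finset.mem_filter] at hx ⊢
    obtain ⟨⟨⟨⟨hu, hv⟩, hs⟩, hb⟩, hA1, hA2⟩ := hx
    exact ⟨⟨⟨hA1, hA2⟩, by linarith⟩, hb⟩
  · rintro ⟨⟨a, a'⟩, b⟩ _; simp
  · rintro ⟨⟨u, v⟩, b⟩ _; simp

lemma countD (A B : Finset ℝ) (b b' : ℝ) (hb : b ∈ B) :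
    ((A + B).filter (fun u => u - b ∈ A ∧ u - b' ∈ A)).card = dlt A A (b - b') := by
  rw [dlt]
  refine Finset.card_nbij' (fun u => (u - b', u - b)) (fun q => q.2 + b) ?_ ?_ ?_ ?_
  · intro u hu
    simp only [Finset.mem_coe, Finset.mem_filter, Finset.mem_product] at hu ⊢
    exact ⟨⟨hu.2.2, hu.2.1⟩, by ring⟩
  · rintro ⟨x, y⟩ hq
    simp only [Finset.mem_coe, Finset.mem_filter, Finset.mem_product] at hq ⊢
    obtain ⟨⟨hx, hy⟩, hs⟩ := hq
    refine ⟨Finset.add_mem_add hy hb, by simpa using hy, ?_⟩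
    have : y + b - b' = x := by linarith
    rwa [this]
  · intro u _; simp
  · rintro ⟨x, y⟩ hq
    simp only [Finset.mem_coe, Finset.mem_filter, Finset.mem_product] at hq
    obtain ⟨⟨hx, hy⟩, hs⟩ := hq
    have : y + b - b' = x := by linarith
    simp [this]

lemma sumD (A B : Finset ℝ) :
    ∑ p ∈ (A + B) ×ˢ (A + B), (cC A B p) ^ 2
      = ∑ q ∈ B ×ˢ B, (dlt A A (q.1 - q.2)) ^ 2 := by
  have h1 : ∀ p : ℝ × ℝ, (cC A B p) ^ 2
      = ((B ×ˢ B).filter (fun q : ℝ × ℝ =>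
          (p.1 - q.1 ∈ A ∧ p.2 - q.1 ∈ A) ∧ (p.1 - q.2 ∈ A ∧ p.2 - q.2 ∈ A))).card := by
    intro p
    rw [cC, sq, ← Finset.card_product]
    congr 1
    ext q
    simp only [Finset.mem_product, Finset.mem_filter]
    tauto
  simp only [h1]
  rw [sum_card_comm ((A + B) ×ˢ (A + B)) (B ×ˢ B)
    (fun p q => (p.1 - q.1 ∈ A ∧ p.2 - q.1 ∈ A) ∧ (p.1 - q.2 ∈ A ∧ p.2 - q.2 ∈ A))]
  refine Finset.sum_congr rfl fun q hq => ?_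
  rw [Finset.mem_product] at hq
  have h2 : (((A + B) ×ˢ (A + B)).filter (fun p : ℝ × ℝ =>
      (p.1 - q.1 ∈ A ∧ p.2 - q.1 ∈ A) ∧ (p.1 - q.2 ∈ A ∧ p.2 - q.2 ∈ A)))
    = (((A + B).filter (fun u => u - q.1 ∈ A ∧ u - q.2 ∈ A)) ×ˢ
       ((A + B).filter (fun u => u - q.1 ∈ A ∧ u - q.2 ∈ A))) := by
    ext p
    simp only [Finset.mem_product, Finset.mem_filter]
    tauto
  rw [h2, Finset.card_product, countD A B q.1 q.2 hq.1, sq]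

lemma pairs_fiber (C : Finset ℝ) (f : ℝ → ℝ) :
    ∑ p ∈ C ×ˢ C, f (p.1 - p.2) = ∑ s ∈ C - C, (dlt C C s : ℝ) * f s := by
  rw [← Finset.sum_fiberwise_of_maps_to (g := fun p : ℝ × ℝ => p.1 - p.2) (t := C - C)
    (fun p hp => by
      rw [Finset.mem_product] at hp
      exact Finset.mem_sub.2 ⟨p.1, hp.1, p.2, hp.2, rfl⟩) (fun p => f (p.1 - p.2))]
  refine Finset.sum_congr rfl fun s _ => ?_
  rw [Finset.sum_congr rfl (fun p hp => by rw [(Finset.mem_filter.1 hp).2] :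
      ∀ p ∈ (C ×ˢ C).filter (fun p : ℝ × ℝ => p.1 - p.2 = s), f (p.1 - p.2) = f s),
    Finset.sum_const, nsmul_eq_mul]
  rfl

lemma enAC (A B : Finset ℝ) :
    ∑ p ∈ (A + B) ×ˢ (A + B), (dlt A A (p.1 - p.2) : ℝ) = En A (A + B) := by
  rw [pairs_fiber (A + B) (fun s => (dlt A A s : ℝ)), En]
  rw [Finset.sum_subset (Finset.subset_union_right (s₁ := A - A))
      (f := fun s => (dlt (A+B) (A+B) s : ℝ) * (dlt A A s : ℝ))
      (fun s _ hs => by simp [dlt_eq_zero hs]),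
    Finset.sum_subset (Finset.subset_union_left (s₂ := (A+B) - (A+B)))
      (f := fun s => (dlt A A s : ℝ) * (dlt (A+B) (A+B) s : ℝ))
      (fun s _ hs => by simp [dlt_eq_zero hs])]
  exact Finset.sum_congr rfl fun s _ => mul_comm _ _

lemma holder_core (A B : Finset ℝ) :
    ∑ s ∈ (A - A) ∪ (B - B), (dlt B B s : ℝ) * (dlt A A s : ℝ) ^ 2
      ≤ E3 A ^ ((2:ℝ)/3) * E3 B ^ ((1:ℝ)/3) := by
  have hpq : Real.HolderConjugate (3/2) 3 := Real.holderConjugate_iff.mpr ⟨by norm_num, by norm_num⟩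
  have hE3A : E3 A = ∑ s ∈ (A - A) ∪ (B - B), (dlt A A s : ℝ) ^ 3 :=
    Finset.sum_subset Finset.subset_union_left (fun s _ hs => by simp [dlt_eq_zero hs])
  have hE3B : E3 B = ∑ s ∈ (A - A) ∪ (B - B), (dlt B B s : ℝ) ^ 3 :=
    Finset.sum_subset Finset.subset_union_right (fun s _ hs => by simp [dlt_eq_zero hs])
  calc ∑ s ∈ (A - A) ∪ (B - B), (dlt B B s : ℝ) * (dlt A A s : ℝ) ^ 2
      = ∑ s ∈ (A - A) ∪ (B - B), ((dlt A A s : ℝ) ^ 2) * (dlt B B s : ℝ) :=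
        Finset.sum_congr rfl fun _ _ => mul_comm _ _
    _ ≤ (∑ s ∈ (A - A) ∪ (B - B), |(dlt A A s : ℝ) ^ 2| ^ ((3:ℝ)/2)) ^ (1/((3:ℝ)/2)) *
        (∑ s ∈ (A - A) ∪ (B - B), |(dlt B B s : ℝ)| ^ (3:ℝ)) ^ (1/(3:ℝ)) :=
        Real.inner_le_Lp_mul_Lq _ _ _ hpq
    _ = E3 A ^ ((2:ℝ)/3) * E3 B ^ ((1:ℝ)/3) := by
        rw [hE3A, hE3B]
        congr 1
        · congr 1
          · refine Finset.sum_congr rfl fun s _ => ?_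
            rw [abs_of_nonneg (sq_nonneg _), ← Real.rpow_natCast (dlt A A s : ℝ) 2,
              ← Real.rpow_mul (Nat.cast_nonneg _)]
            norm_num
          · norm_num
        · congr 1
          · refine Finset.sum_congr rfl fun s _ => ?_
            rw [abs_of_nonneg (Nat.cast_nonneg _), ← Real.rpow_natCast (dlt B B s : ℝ) 3]
            norm_num

lemma holder_bound (A B : Finset ℝ) :
    ∑ q ∈ B ×ˢ B, ((dlt A A (q.1 - q.2) : ℝ)) ^ 2
      ≤ E3 A ^ ((2:ℝ)/3) * E3 B ^ ((1:ℝ)/3) := by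
  rw [pairs_fiber B (fun s => (dlt A A s : ℝ) ^ 2),
    Finset.sum_subset (Finset.subset_union_right (s₁ := A - A))
      (f := fun s => (dlt B B s : ℝ) * (dlt A A s : ℝ) ^ 2)
      (fun s _ hs => by simp [dlt_eq_zero hs])]
  exact holder_core A B

lemma dlt_mul_card_eq_zero {A B : Finset ℝ} {s : ℝ} (h : s ∉ (A + B) - (A + B)) :
    dlt A A s * B.card = 0 := by
  rcases Finset.eq_empty_or_nonempty B with hB | ⟨b, hb⟩
  · simp [hB]
  · rcases Nat.eq_zero_or_pos (dlt A A s) with h0 | hpos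
    · simp [h0]
    · exfalso
      have hmem : s ∈ A - A := by
        by_contra hs
        rw [dlt_eq_zero hs] at hpos
        exact lt_irrefl 0 hpos
      obtain ⟨x, hx, y, hy, hxy⟩ := Finset.mem_sub.1 hmem
      exact h (Finset.mem_sub.2 ⟨x + b, Finset.add_mem_add hx hb, y + b,
        Finset.add_mem_add hy hb, by linarith⟩)

lemma rpow_split (x : ℝ) (hx : 0 ≤ x) : x ^ ((3:ℝ)/2) = x ^ ((1:ℝ)/2) * x := by
  rcases eq_or_lt_of_le hx with h | h
  · rw [← h, Real.zero_rpow (by norm_num), Real.zero_rpow (by norm_num), zero_mul]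
  · rw [show (3:ℝ)/2 = 1/2 + 1 by norm_num, Real.rpow_add h, Real.rpow_one]

lemma sq_rpow_half (x : ℝ) (hx : 0 ≤ x) : (x ^ ((1:ℝ)/2)) ^ 2 = x := by
  rw [← Real.rpow_natCast (x ^ ((1:ℝ)/2)) 2, ← Real.rpow_mul hx]
  norm_num

/-- Step 1: `E15 A * |B| = σ`. -/
lemma step1 (A B : Finset ℝ) :
    E15 A * B.card =
      ∑ p ∈ (A + B) ×ˢ (A + B),
        (dlt A A (p.1 - p.2) : ℝ) ^ ((1:ℝ)/2) * (cC A B p : ℝ) := by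
  have hmaps : ∀ p ∈ (A + B) ×ˢ (A + B),
      (fun p : ℝ × ℝ => p.1 - p.2) p ∈ (A + B) - (A + B) := fun p hp => by
    rw [Finset.mem_product] at hp
    exact Finset.mem_sub.2 ⟨p.1, hp.1, p.2, hp.2, rfl⟩
  rw [← Finset.sum_fiberwise_of_maps_to hmaps
    (fun p => (dlt A A (p.1 - p.2) : ℝ) ^ ((1:ℝ)/2) * (cC A B p : ℝ))]
  have inner : ∀ s ∈ (A + B) - (A + B),
      (∑ p ∈ ((A + B) ×ˢ (A + B)).filter (fun p : ℝ × ℝ => p.1 - p.2 = s),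
        (dlt A A (p.1 - p.2) : ℝ) ^ ((1:ℝ)/2) * (cC A B p : ℝ))
      = (dlt A A s : ℝ) ^ ((1:ℝ)/2) * ((dlt A A s : ℝ) * B.card) := by
    intro s _
    rw [Finset.sum_congr rfl (fun p hp => by rw [(Finset.mem_filter.1 hp).2]),
      ← Finset.mul_sum]
    congr 1
    have hc : ((dlt A A s : ℝ) * B.card)
        = ((∑ p ∈ ((A + B) ×ˢ (A + B)).filter (fun p : ℝ × ℝ => p.1 - p.2 = s),
            cC A B p : ℕ) : ℝ) := by exact_mod_cast key_count A B s
    push_cast at hc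
    rw [← hc]
  rw [Finset.sum_congr rfl inner]
  have lhs_eq : E15 A * B.card
      = ∑ s ∈ A - A, (dlt A A s : ℝ) ^ ((1:ℝ)/2) * ((dlt A A s : ℝ) * B.card) := by
    rw [E15, Finset.sum_mul]
    refine Finset.sum_congr rfl fun s _ => ?_
    rw [rpow_split _ (Nat.cast_nonneg _), mul_assoc]
  have e1 : (∑ s ∈ A - A, (dlt A A s : ℝ) ^ ((1:ℝ)/2) * ((dlt A A s : ℝ) * B.card))
      = ∑ s ∈ (A - A) ∪ ((A + B) - (A + B)),
          (dlt A A s : ℝ) ^ ((1:ℝ)/2) * ((dlt A A s : ℝ) * B.card) :=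
    Finset.sum_subset Finset.subset_union_left
      (fun s _ hs => by simp [dlt_eq_zero hs, Real.zero_rpow (by norm_num : (1:ℝ)/2 ≠ 0)])
  have e2 : (∑ s ∈ (A + B) - (A + B), (dlt A A s : ℝ) ^ ((1:ℝ)/2) * ((dlt A A s : ℝ) * B.card))
      = ∑ s ∈ (A - A) ∪ ((A + B) - (A + B)),
          (dlt A A s : ℝ) ^ ((1:ℝ)/2) * ((dlt A A s : ℝ) * B.card) :=
    Finset.sum_subset Finset.subset_union_right
      (fun s _ hs => by
        have h0 : ((dlt A A s : ℝ) * B.card) = 0 := by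
          exact_mod_cast congrArg (fun n : ℕ => (n : ℝ)) (dlt_mul_card_eq_zero hs)
        simp [h0])
  rw [lhs_eq, e1, ← e2]

lemma en_nonneg (A B : Finset ℝ) : 0 ≤ En A (A + B) :=
  Finset.sum_nonneg fun s _ => mul_nonneg (Nat.cast_nonneg _) (Nat.cast_nonneg _)

theorem stmt1 (A B : Finset ℝ) :
    (E15 A) ^ 2 * (B.card : ℝ) ^ 2 ≤
      (E3 A) ^ ((2 : ℝ) / 3) * (E3 B) ^ ((1 : ℝ) / 3) * En A (A + B) := by
  have CS := Finset.sum_mul_sq_le_sq_mul_sq ((A + B) ×ˢ (A + B))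
    (fun p => (dlt A A (p.1 - p.2) : ℝ) ^ ((1:ℝ)/2)) (fun p => (cC A B p : ℝ))
  rw [← mul_pow, step1 A B]
  have hfs : (∑ p ∈ (A + B) ×ˢ (A + B),
      ((dlt A A (p.1 - p.2) : ℝ) ^ ((1:ℝ)/2)) ^ 2) = En A (A + B) := by
    rw [← enAC A B]
    exact Finset.sum_congr rfl fun p _ => sq_rpow_half _ (Nat.cast_nonneg _)
  have hsumD : (∑ p ∈ (A + B) ×ˢ (A + B), (cC A B p : ℝ) ^ 2)
      = ∑ q ∈ B ×ˢ B, ((dlt A A (q.1 - q.2) : ℝ)) ^ 2 := by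
    have := sumD A B
    exact_mod_cast congrArg (fun n : ℕ => (n : ℝ)) this
  calc (∑ p ∈ (A + B) ×ˢ (A + B),
        (dlt A A (p.1 - p.2) : ℝ) ^ ((1:ℝ)/2) * (cC A B p : ℝ)) ^ 2
      ≤ (∑ p ∈ (A + B) ×ˢ (A + B), ((dlt A A (p.1 - p.2) : ℝ) ^ ((1:ℝ)/2)) ^ 2) *
          ∑ p ∈ (A + B) ×ˢ (A + B), (cC A B p : ℝ) ^ 2 := CS
    _ = En A (A + B) * ∑ q ∈ B ×ˢ B, ((dlt A A (q.1 - q.2) : ℝ)) ^ 2 := by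
        rw [hfs, hsumD]
    _ ≤ En A (A + B) * (E3 A ^ ((2:ℝ)/3) * E3 B ^ ((1:ℝ)/3)) :=
        mul_le_mul_of_nonneg_left (holder_bound A B) (en_nonneg A B)
    _ = (E3 A) ^ ((2 : ℝ) / 3) * (E3 B) ^ ((1 : ℝ) / 3) * En A (A + B) := by ring
end

section
/- For any finite sets A, C ⊂ ℝ and finite F ⊂ ℝ, if E(A,F) denotes additive energy, then |A|^8 / |A−A| ≤ E_3(A) · E(A, A−A), where E_3(A) = Σ_s δ_A(s)^3 and E(A, A−A) = Σ_s δ_A(s)δ_{A−A}(s). -/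
open Finset Pointwise

noncomputable def Tc (A : Finset ℝ) (s t : ℝ) : ℕ :=
  (A.filter (fun x => x - s ∈ A ∧ x - t ∈ A)).card

lemma dlt_eq (A : Finset ℝ) (s : ℝ) :
    dlt A A s = (A.filter (fun x => x - s ∈ A)).card := by
  unfold dlt
  refine Finset.card_nbij' (fun p => p.1) (fun x => (x, x - s)) ?_ ?_ ?_ ?_
  · intro p hp
    simp only [Finset.mem_coe, Finset.mem_filter, Finset.mem_product] at hp ⊢
    refine ⟨hp.1.1, ?_⟩
    have h : p.1 - s = p.2 := by linarith [hp.2]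
    rw [h]; exact hp.1.2
  · intro x hx
    simp only [Finset.mem_coe, Finset.mem_filter, Finset.mem_product] at hx ⊢
    exact ⟨⟨hx.1, hx.2⟩, by ring⟩
  · intro p hp
    simp only [Finset.mem_coe, Finset.mem_filter, Finset.mem_product] at hp
    have h : p.1 - s = p.2 := by linarith [hp.2]
    exact Prod.ext rfl h
  · intro x hx; rfl

lemma mass (A : Finset ℝ) :
    ∑ s ∈ A - A, dlt A A s = A.card * A.card := by
  have h : (A ×ˢ A).card = ∑ s ∈ A - A, ((A ×ˢ A).filter (fun p => p.1 - p.2 = s)).card := by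
    refine Finset.card_eq_sum_card_fiberwise ?_
    intro p hp
    simp only [Finset.mem_coe, Finset.mem_product] at hp
    exact Finset.mem_sub.2 ⟨p.1, hp.1, p.2, hp.2, rfl⟩
  rw [Finset.card_product] at h
  exact h.symm

lemma fiber_eq (A : Finset ℝ) (s t : ℝ) :
    (((A.filter (fun x => x - s ∈ A)) ×ˢ A).filter (fun p => p.1 - p.2 = t)).card
      = Tc A s t := by
  unfold Tc
  refine Finset.card_nbij' (fun p => p.1) (fun x => (x, x - t)) ?_ ?_ ?_ ?_
  · intro p hp
    simp only [Finset.mem_coe, Finset.mem_filter, Finset.mem_product] at hp ⊢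
    refine ⟨hp.1.1.1, hp.1.1.2, ?_⟩
    have h : p.1 - t = p.2 := by linarith [hp.2]
    rw [h]; exact hp.1.2
  · intro x hx
    simp only [Finset.mem_coe, Finset.mem_filter, Finset.mem_product] at hx ⊢
    exact ⟨⟨⟨hx.1, hx.2.1⟩, hx.2.2⟩, by ring⟩
  · intro p hp
    simp only [Finset.mem_coe, Finset.mem_filter, Finset.mem_product] at hp
    have h : p.1 - t = p.2 := by linarith [hp.2]
    exact Prod.ext rfl h
  · intro x hx; rfl

lemma rowsum (A : Finset ℝ) (s : ℝ) :
    ∑ t ∈ A - A, Tc A s t = dlt A A s * A.card := by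
  rw [dlt_eq]
  have h : ((A.filter (fun x => x - s ∈ A)) ×ˢ A).card
      = ∑ t ∈ A - A, (((A.filter (fun x => x - s ∈ A)) ×ˢ A).filter
          (fun p => p.1 - p.2 = t)).card := by
    refine Finset.card_eq_sum_card_fiberwise ?_
    intro p hp
    simp only [Finset.mem_coe, Finset.mem_product, Finset.mem_filter] at hp
    exact Finset.mem_sub.2 ⟨p.1, hp.1.1, p.2, hp.2, rfl⟩
  rw [Finset.card_product] at h
  have h2 : ∑ t ∈ A - A, Tc A s t
      = ∑ t ∈ A - A, (((A.filter (fun x => x - s ∈ A)) ×ˢ A).filter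
          (fun p => p.1 - p.2 = t)).card :=
    Finset.sum_congr rfl (fun t _ => (fiber_eq A s t).symm)
  rw [h2]; exact h.symm

lemma ite_and_mul (a b : Prop) [Decidable a] [Decidable b] :
    (if a ∧ b then (1:ℕ) else 0) = (if a then 1 else 0) * (if b then 1 else 0) := by
  by_cases ha : a <;> by_cases hb : b <;> simp [ha, hb]

lemma cnt_eq (A : Finset ℝ) {x y : ℝ} (hx : x ∈ A) (hy : y ∈ A) :
    ((A - A).filter (fun s => x - s ∈ A ∧ y - s ∈ A)).card = dlt A A (x - y) := by
  unfold dlt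
  refine Finset.card_nbij' (fun s => (x - s, y - s)) (fun p => x - p.1) ?_ ?_ ?_ ?_
  · intro s hs
    simp only [Finset.mem_coe, Finset.mem_filter, Finset.mem_product] at hs ⊢
    exact ⟨⟨hs.2.1, hs.2.2⟩, by ring⟩
  · intro p hp
    simp only [Finset.mem_coe, Finset.mem_filter, Finset.mem_product] at hp ⊢
    refine ⟨Finset.mem_sub.2 ⟨x, hx, p.1, hp.1.1, rfl⟩, ?_, ?_⟩
    · have : x - (x - p.1) = p.1 := by ring
      rw [this]; exact hp.1.1
    · have : y - (x - p.1) = p.2 := by have := hp.2; linarith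
      rw [this]; exact hp.1.2
  · intro s hs; ring
  · intro p hp
    simp only [Finset.mem_coe, Finset.mem_filter, Finset.mem_product] at hp
    have h1 : x - (x - p.1) = p.1 := by ring
    have h2 : y - (x - p.1) = p.2 := by have := hp.2; linarith
    show (x - (x - p.1), y - (x - p.1)) = p
    rw [h1, h2]

lemma tc_sq (A : Finset ℝ) (s t : ℝ) :
    Tc A s t ^ 2 = ∑ q ∈ A ×ˢ A,
      ((if q.1 - s ∈ A ∧ q.1 - t ∈ A then (1:ℕ) else 0) *
        (if q.2 - s ∈ A ∧ q.2 - t ∈ A then (1:ℕ) else 0)) := by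
  unfold Tc
  rw [sq, Finset.card_filter, Finset.sum_mul_sum, Finset.sum_product]

lemma key3a (A : Finset ℝ) :
    ∑ s ∈ A - A, ∑ t ∈ A - A, Tc A s t ^ 2 = ∑ p ∈ (A - A) ×ˢ (A - A), Tc A p.1 p.2 ^ 2 :=
  (Finset.sum_product' (A - A) (A - A) (fun s t => Tc A s t ^ 2)).symm

lemma key3 (A : Finset ℝ) :
    ∑ s ∈ A - A, ∑ t ∈ A - A, Tc A s t ^ 2 = ∑ u ∈ A - A, dlt A A u ^ 3 := by
  classical
  rw [key3a]
  have step2 : ∑ p ∈ (A - A) ×ˢ (A - A), Tc A p.1 p.2 ^ 2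
      = ∑ p ∈ (A - A) ×ˢ (A - A), ∑ q ∈ A ×ˢ A,
        ((if q.1 - p.1 ∈ A ∧ q.1 - p.2 ∈ A then (1:ℕ) else 0) *
          (if q.2 - p.1 ∈ A ∧ q.2 - p.2 ∈ A then (1:ℕ) else 0)) :=
    Finset.sum_congr rfl (fun p _ => tc_sq A p.1 p.2)
  rw [step2, Finset.sum_comm]
  have step3 : ∀ q ∈ A ×ˢ A, ∑ p ∈ (A - A) ×ˢ (A - A),
        ((if q.1 - p.1 ∈ A ∧ q.1 - p.2 ∈ A then (1:ℕ) else 0) *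
          (if q.2 - p.1 ∈ A ∧ q.2 - p.2 ∈ A then (1:ℕ) else 0))
      = dlt A A (q.1 - q.2) ^ 2 := by
    intro q hq
    simp only [Finset.mem_product] at hq
    have swap : ∀ p : ℝ × ℝ,
        ((if q.1 - p.1 ∈ A ∧ q.1 - p.2 ∈ A then (1:ℕ) else 0) *
          (if q.2 - p.1 ∈ A ∧ q.2 - p.2 ∈ A then (1:ℕ) else 0))
        = (fun s t => ((if q.1 - s ∈ A ∧ q.2 - s ∈ A then (1:ℕ) else 0) *
            (if q.1 - t ∈ A ∧ q.2 - t ∈ A then (1:ℕ) else 0))) p.1 p.2 := by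
      intro p
      simp only
      rw [ite_and_mul, ite_and_mul, ite_and_mul, ite_and_mul]
      ring
    rw [Finset.sum_congr rfl (fun p _ => swap p)]
    rw [Finset.sum_product' (A - A) (A - A)
      (fun s t => ((if q.1 - s ∈ A ∧ q.2 - s ∈ A then (1:ℕ) else 0) *
        (if q.1 - t ∈ A ∧ q.2 - t ∈ A then (1:ℕ) else 0)))]
    rw [← Finset.sum_mul_sum]
    have c1 : ∑ s ∈ A - A, (if q.1 - s ∈ A ∧ q.2 - s ∈ A then (1:ℕ) else 0)
        = dlt A A (q.1 - q.2) := by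
      rw [← cnt_eq A hq.1 hq.2, Finset.card_filter]
    rw [c1]; ring
  rw [Finset.sum_congr rfl step3]
  rw [← Finset.sum_fiberwise_of_maps_to (g := fun q : ℝ × ℝ => q.1 - q.2)
    (t := A - A) (fun q hq => by
      simp only [Finset.mem_product] at hq
      exact Finset.mem_sub.2 ⟨q.1, hq.1, q.2, hq.2, rfl⟩)]
  refine Finset.sum_congr rfl (fun u hu => ?_)
  have h1 : ∀ q ∈ (A ×ˢ A).filter (fun q : ℝ × ℝ => q.1 - q.2 = u),
      dlt A A (q.1 - q.2) ^ 2 = dlt A A u ^ 2 := by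
    intro q hq
    rw [(Finset.mem_filter.1 hq).2]
  rw [Finset.sum_congr rfl h1, Finset.sum_const]
  have hcard : ((A ×ˢ A).filter (fun q : ℝ × ℝ => q.1 - q.2 = u)).card
      = dlt A A u := rfl
  rw [hcard, smul_eq_mul]
  ring

lemma cnt_pos (A : Finset ℝ) (s : ℝ) :
    ((A - A).filter (fun t => Tc A s t ≠ 0)).card ≤ dlt (A - A) (A - A) s := by
  unfold dlt
  refine Finset.card_le_card_of_injOn (fun t => (t, t - s)) ?_ ?_
  · intro t ht
    simp only [Finset.mem_coe, Finset.mem_filter] at ht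
    obtain ⟨htD, hT⟩ := ht
    obtain ⟨x, hxmem⟩ := Finset.card_ne_zero.1 hT
    simp only [Finset.mem_filter] at hxmem
    obtain ⟨hxA, hxs, hxt⟩ := hxmem
    simp only [Finset.mem_coe, Finset.mem_filter, Finset.mem_product]
    exact ⟨⟨htD, Finset.mem_sub.2 ⟨x - s, hxs, x - t, hxt, by ring⟩⟩, by ring⟩
  · intro a _ b _ hab
    exact congrArg Prod.fst hab

theorem stmt19 (A : Finset ℝ) :
    (A.card : ℝ) ^ 8 / ((A - A).card : ℝ) ≤ E3 A * En A (A - A) := by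
  classical
  rcases A.eq_empty_or_nonempty with hA | hA
  · subst hA
    simp [E3, En]
  set D := A - A with hD
  set a : ℝ := (A.card : ℝ) with ha_def
  set d : ℝ → ℝ := fun s => (dlt A A s : ℝ) with hd_def
  have hdnn : ∀ s, 0 ≤ d s := fun s => Nat.cast_nonneg _
  have ha : 0 < a := by
    have h0 : 0 < A.card := Finset.card_pos.2 hA
    rw [ha_def]
    exact_mod_cast h0
  have hDne : D.Nonempty := by
    obtain ⟨x, hx⟩ := hA
    exact ⟨x - x, Finset.mem_sub.2 ⟨x, hx, x, hx, rfl⟩⟩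
  have hDpos : (0:ℝ) < (D.card : ℝ) := by exact_mod_cast Finset.card_pos.2 hDne
  -- cast identities
  have hmass : ∑ s ∈ D, d s = a ^ 2 := by
    have h := mass A
    have h2 : ((∑ s ∈ D, dlt A A s : ℕ) : ℝ) = ((A.card * A.card : ℕ) : ℝ) := by
      rw [h]
    push_cast at h2
    simpa [hd_def, ha_def, sq] using h2
  have hrow : ∀ s, ∑ t ∈ D, (Tc A s t : ℝ) = d s * a := by
    intro s
    have h := rowsum A s
    have h2 : ((∑ t ∈ D, Tc A s t : ℕ) : ℝ) = ((dlt A A s * A.card : ℕ) : ℝ) := by rw [h]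
    push_cast at h2
    simpa [hd_def, ha_def] using h2
  have hE3 : ∑ s ∈ D, ∑ t ∈ D, (Tc A s t : ℝ) ^ 2 = E3 A := by
    have h := key3 A
    have h2 : ((∑ s ∈ D, ∑ t ∈ D, Tc A s t ^ 2 : ℕ) : ℝ)
        = ((∑ u ∈ D, dlt A A u ^ 3 : ℕ) : ℝ) := by rw [h]
    push_cast at h2
    rw [E3, ← hD]
    exact h2
  have hcnt : ∀ s, ((D.filter (fun t => Tc A s t ≠ 0)).card : ℝ) ≤ (dlt D D s : ℝ) := by
    intro s
    exact_mod_cast cnt_pos A s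
  set S : ℝ := ∑ s ∈ D, d s * Real.sqrt (d s) with hS_def
  set Q : ℝ := ∑ s ∈ D, Real.sqrt (d s) with hQ_def
  have hSnn : 0 ≤ S := Finset.sum_nonneg fun s _ => by positivity
  have hQnn : 0 ≤ Q := Finset.sum_nonneg fun s _ => Real.sqrt_nonneg _
  -- Cauchy-Schwarz 1 : (∑ d)^2 ≤ S * Q
  have cs1 : (a ^ 2) ^ 2 ≤ S * Q := by
    have h := Finset.sum_mul_sq_le_sq_mul_sq D
      (fun s => Real.sqrt (d s * Real.sqrt (d s))) (fun s => Real.sqrt (Real.sqrt (d s)))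
    have hfg : ∀ s ∈ D, Real.sqrt (d s * Real.sqrt (d s)) * Real.sqrt (Real.sqrt (d s))
        = d s := by
      intro s _
      rw [← Real.sqrt_mul (by positivity)]
      have e : d s * Real.sqrt (d s) * Real.sqrt (d s) = d s * d s := by
        rw [mul_assoc, Real.mul_self_sqrt (hdnn s)]
      rw [e, Real.sqrt_mul_self (hdnn s)]
    have hf2 : ∀ s ∈ D, Real.sqrt (d s * Real.sqrt (d s)) ^ 2 = d s * Real.sqrt (d s) :=
      fun s _ => Real.sq_sqrt (by positivity)
    have hg2 : ∀ s ∈ D, Real.sqrt (Real.sqrt (d s)) ^ 2 = Real.sqrt (d s) :=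
      fun s _ => Real.sq_sqrt (Real.sqrt_nonneg _)
    rw [Finset.sum_congr rfl hfg, Finset.sum_congr rfl hf2, Finset.sum_congr rfl hg2,
      hmass] at h
    exact h
  -- Cauchy-Schwarz 2 : Q^2 ≤ |D| * a^2
  have cs2 : Q ^ 2 ≤ (D.card : ℝ) * a ^ 2 := by
    have h := Finset.sum_mul_sq_le_sq_mul_sq D (fun _ => (1:ℝ)) (fun s => Real.sqrt (d s))
    have hg2 : ∀ s ∈ D, Real.sqrt (d s) ^ 2 = d s := fun s _ => Real.sq_sqrt (hdnn s)
    simp only [one_mul, one_pow] at h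
    rw [Finset.sum_congr rfl hg2, hmass, Finset.sum_const, nsmul_eq_mul, mul_one] at h
    exact h
  -- Cauchy-Schwarz 3 : (a*S)^2 ≤ En A D * E3 A
  have cs3 : (a * S) ^ 2 ≤ En A D * E3 A := by
    have h := Finset.sum_mul_sq_le_sq_mul_sq (D ×ˢ D)
      (fun p => if Tc A p.1 p.2 = 0 then (0:ℝ) else Real.sqrt (d p.1))
      (fun p => (Tc A p.1 p.2 : ℝ))
    have hL : ∑ p ∈ D ×ˢ D,
        (if Tc A p.1 p.2 = 0 then (0:ℝ) else Real.sqrt (d p.1)) * (Tc A p.1 p.2 : ℝ)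
        = a * S := by
      have e : ∀ p ∈ D ×ˢ D,
          (if Tc A p.1 p.2 = 0 then (0:ℝ) else Real.sqrt (d p.1)) * (Tc A p.1 p.2 : ℝ)
          = (fun s t => Real.sqrt (d s) * (Tc A s t : ℝ)) p.1 p.2 := by
        intro p _
        by_cases hT : Tc A p.1 p.2 = 0 <;> simp [hT]
      rw [Finset.sum_congr rfl e,
        Finset.sum_product' D D (fun s t => Real.sqrt (d s) * (Tc A s t : ℝ))]
      have e2 : ∀ s ∈ D, ∑ t ∈ D, Real.sqrt (d s) * (Tc A s t : ℝ)
          = (d s * Real.sqrt (d s)) * a := by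
        intro s _
        rw [← Finset.mul_sum, hrow s]; ring
      rw [Finset.sum_congr rfl e2, ← Finset.sum_mul, hS_def]
      ring
    have hF2 : ∑ p ∈ D ×ˢ D,
        (if Tc A p.1 p.2 = 0 then (0:ℝ) else Real.sqrt (d p.1)) ^ 2 ≤ En A D := by
      have e : ∀ p ∈ D ×ˢ D,
          (if Tc A p.1 p.2 = 0 then (0:ℝ) else Real.sqrt (d p.1)) ^ 2
          = (fun s t => if Tc A s t = 0 then (0:ℝ) else d s) p.1 p.2 := by
        intro p _
        by_cases hT : Tc A p.1 p.2 = 0 <;> simp [hT, Real.sq_sqrt (hdnn p.1)]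
      rw [Finset.sum_congr rfl e,
        Finset.sum_product' D D (fun s t => if Tc A s t = 0 then (0:ℝ) else d s)]
      have e2 : ∀ s ∈ D, ∑ t ∈ D, (if Tc A s t = 0 then (0:ℝ) else d s)
          = d s * ((D.filter (fun t => Tc A s t ≠ 0)).card : ℝ) := by
        intro s _
        have e3 : ∀ t ∈ D, (if Tc A s t = 0 then (0:ℝ) else d s)
            = d s * (if Tc A s t ≠ 0 then (1:ℝ) else 0) := by
          intro t _
          by_cases hT : Tc A s t = 0 <;> simp [hT]
        rw [Finset.sum_congr rfl e3, ← Finset.mul_sum, Finset.sum_boole]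
      rw [Finset.sum_congr rfl e2]
      refine le_trans (Finset.sum_le_sum (fun s _ =>
        mul_le_mul_of_nonneg_left (hcnt s) (hdnn s))) ?_
      rw [En, ← hD]
    have hG2 : ∑ p ∈ D ×ˢ D, (Tc A p.1 p.2 : ℝ) ^ 2 = E3 A := by
      rw [Finset.sum_product' D D (fun s t => (Tc A s t : ℝ) ^ 2)]
      exact hE3
    rw [hL, hG2] at h
    refine le_trans h ?_
    have hE3nn : 0 ≤ E3 A := by
      rw [← hG2]
      exact Finset.sum_nonneg fun p _ => sq_nonneg _
    exact mul_le_mul_of_nonneg_right hF2 hE3nn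
  -- assemble
  rw [div_le_iff₀ hDpos]
  have e1 : a ^ 8 ≤ (S * Q) ^ 2 := by
    calc a ^ 8 = ((a ^ 2) ^ 2) ^ 2 := by ring
      _ ≤ (S * Q) ^ 2 := pow_le_pow_left₀ (by positivity) cs1 2
  have e2 : (S * Q) ^ 2 ≤ S ^ 2 * ((D.card : ℝ) * a ^ 2) := by
    calc (S * Q) ^ 2 = S ^ 2 * Q ^ 2 := by ring
      _ ≤ S ^ 2 * ((D.card : ℝ) * a ^ 2) :=
          mul_le_mul_of_nonneg_left cs2 (sq_nonneg S)
  have e4 : a ^ 2 * S ^ 2 ≤ En A D * E3 A := by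
    calc a ^ 2 * S ^ 2 = (a * S) ^ 2 := by ring
      _ ≤ En A D * E3 A := cs3
  have e5 : S ^ 2 * ((D.card : ℝ) * a ^ 2) * a ^ 2
      ≤ En A D * E3 A * (D.card : ℝ) * a ^ 2 := by
    calc S ^ 2 * ((D.card : ℝ) * a ^ 2) * a ^ 2
        = (a ^ 2 * S ^ 2) * ((D.card : ℝ) * a ^ 2) := by ring
      _ ≤ (En A D * E3 A) * ((D.card : ℝ) * a ^ 2) :=
          mul_le_mul_of_nonneg_right e4
            (mul_nonneg (Nat.cast_nonneg _) (sq_nonneg a))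
      _ = En A D * E3 A * (D.card : ℝ) * a ^ 2 := by ring
  have e6 : a ^ 8 * a ^ 2 ≤ En A D * E3 A * (D.card : ℝ) * a ^ 2 := by
    calc a ^ 8 * a ^ 2 ≤ (S ^ 2 * ((D.card : ℝ) * a ^ 2)) * a ^ 2 :=
          mul_le_mul_of_nonneg_right (le_trans e1 e2) (sq_nonneg a)
      _ ≤ En A D * E3 A * (D.card : ℝ) * a ^ 2 := e5
  have e7 : a ^ 8 ≤ En A D * E3 A * (D.card : ℝ) :=
    le_of_mul_le_mul_right e6 (pow_pos ha 2)
  calc a ^ 8 ≤ En A D * E3 A * (D.card : ℝ) := e7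
    _ = E3 A * En A D * (D.card : ℝ) := by ring
end
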